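/- Let n ≥ 3, 2 ≤ i_1 ≤ n−2, t_2 = 0, and i_1 < i_2 ≤ n−2. Define C_1 = ... = C_{i_1} = C_n = [n], C_{i_1+1} = ... = C_{i_2} = [n] \ [i_1], C_{i_2+1} = ... = C_{n−1} = [n] \ [i_2]. Then {Σ_{k=1}^n e_{j_k} : j_k ∈ C_k} = {α ∈ ℕ^n : |α| = n, α_1 + ... + α_{i_1} ≤ i_1 + 1, α_1 + ... + α_{i_2} ≤ i_2 + 1}. -/

import Mathlib

private lemma auxA {n : ℕ} (L : List (Fin n)) (m : Fin n) :
    (L.map (fun x => Pi.single x (1:ℕ))).sum m = L.count m := by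
  induction L with
  | nil => simp
  | cons a L ih =>
    simp only [List.map_cons, List.sum_cons, Pi.add_apply, ih, List.count_cons,
      Pi.single_apply, beq_iff_eq]
    rcases eq_or_ne m a with rfl | h
    · simp [Nat.add_comm]
    · simp [h, h.symm]

private lemma auxB {n : ℕ} (L : List (Fin n)) (hs : L.Pairwise (· ≤ ·)) (c : ℕ) (i : Fin L.length)
    (h : L.countP (fun x => decide (x.val < c)) ≤ i.val) : c ≤ (L.get i).val := by
  by_contra hc
  push_neg at hc
  have htake : L.countP (fun x => decide (x.val < c)) ≥ i.val + 1 := by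
    have hsub : (L.take (i.val+1)).Sublist L := List.take_sublist _ _
    have hall : ∀ x ∈ L.take (i.val+1), (fun x : Fin n => decide (x.val < c)) x = true := by
      intro x hx
      rw [List.mem_iff_getElem] at hx
      obtain ⟨j, hj, rfl⟩ := hx
      have hj' : j < L.length := by
        have := hj; simp [List.length_take] at this; omega
      rw [List.getElem_take]
      simp only [decide_eq_true_eq]
      have hji : j ≤ i.val := by simp [List.length_take] at hj; omega
      rcases lt_or_eq_of_le hji with h' | h'
      · have h2 := hs.rel_get_of_lt (a := ⟨j, hj'⟩) (b := i) (Fin.lt_def.mpr h')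
        rw [Fin.le_def] at h2
        simp only [List.get_eq_getElem] at h2 hc ⊢
        omega
      · subst h'
        simp only [List.get_eq_getElem] at hc
        omega
    have h1 : List.countP (fun x : Fin n => decide (x.val < c)) (L.take (i.val+1)) = i.val + 1 := by
      rw [List.countP_eq_length.mpr hall, List.length_take]
      have := i.isLt; omega
    calc i.val + 1 = _ := h1.symm
      _ ≤ _ := hsub.countP_le
  omega

private lemma auxC {n : ℕ} {M : Type*} [AddCommMonoid M] (L : List (Fin n)) (f : Fin n → M) :
    ∑ i : Fin L.length, f (L.get i) = (L.map f).sum := by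
  rw [← Fin.sum_univ_getElem (L.map f)]
  refine Fintype.sum_equiv (finCongr (List.length_map f).symm)
    (fun i => f (L.get i)) (fun i' => (L.map f)[(i' : ℕ)]) ?_
  intro i
  simp

private lemma auxE {n : ℕ} (L : List (Fin n)) (p : Fin n → Prop) [DecidablePred p] :
    ∑ m ∈ Finset.univ.filter p, L.count m = L.countP (fun x => decide (p x)) := by
  induction L with
  | nil => simp
  | cons a L ih =>
    simp only [List.count_cons, List.countP_cons, Finset.sum_add_distrib, ih, beq_iff_eq,
      decide_eq_true_eq]
    congr 1
    rw [Finset.sum_ite_eq (Finset.univ.filter p) a (fun _ => (1:ℕ))]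
    simp [Finset.mem_filter]

private lemma auxF (N a : ℕ) :
    (∑ k ∈ Finset.range N, if k < a then (1:ℕ) else 0) = min a N := by
  induction N with
  | zero => simp
  | succ N ih =>
    rw [Finset.sum_range_succ, ih]
    by_cases h : N < a <;> simp [h] <;> omega

theorem stmt11 (n i1 i2 t2 : ℕ) (hn : 3 ≤ n) (hi1a : 2 ≤ i1) (hi1b : i1 ≤ n - 2)
    (ht2 : t2 = 0) (hi2a : i1 < i2) (hi2b : i2 ≤ n - 2)
    (C : Fin n → Set (Fin n))
    (hC : ∀ k : Fin n,
      C k = if k.val < i1 ∨ k.val = n - 1 then (Set.univ : Set (Fin n))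
            else if k.val < i2 then {m : Fin n | i1 ≤ m.val}
            else {m : Fin n | i2 ≤ m.val}) :
    {α : Fin n → ℕ | ∃ j : Fin n → Fin n, (∀ k, j k ∈ C k) ∧ α = ∑ k, Pi.single (j k) 1} =
    {α : Fin n → ℕ | ∑ k, α k = n ∧
      ∑ k ∈ Finset.univ.filter (fun m : Fin n => m.val < i1), α k ≤ i1 + 1 ∧
      ∑ k ∈ Finset.univ.filter (fun m : Fin n => m.val < i2), α k ≤ i2 + 1} := by
  ext α
  simp only [Set.mem_setOf_eq]
  constructor
  · rintro ⟨j, hj, rfl⟩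
    have hval : ∀ m, (∑ k, Pi.single (j k) (1:ℕ) : Fin n → ℕ) m = ∑ k, if m = j k then 1 else 0 := by
      intro m
      rw [Finset.sum_apply]
      simp only [Pi.single_apply]
    have key : ∀ c : ℕ, (∀ k : Fin n, (j k).val < c → (k.val < c ∨ k.val = n - 1)) →
        ∑ k ∈ Finset.univ.filter (fun m : Fin n => m.val < c),
          (∑ k', Pi.single (j k') (1:ℕ)) k ≤ c + 1 := by
      intro c hcc
      have h1 : ∑ k ∈ Finset.univ.filter (fun m : Fin n => m.val < c),
          (∑ k', Pi.single (j k') (1:ℕ)) k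
          = ∑ k' : Fin n, if (j k').val < c then 1 else 0 := by
        have hrw : ∑ k ∈ Finset.univ.filter (fun m : Fin n => m.val < c),
            (∑ k', Pi.single (j k') (1:ℕ))  k
            = ∑ k ∈ Finset.univ.filter (fun m : Fin n => m.val < c),
              ∑ k' : Fin n, if k = j k' then 1 else 0 :=
          Finset.sum_congr rfl (fun m _ => hval m)
        rw [hrw, Finset.sum_comm]
        apply Finset.sum_congr rfl
        intro k' _
        rw [Finset.sum_ite_eq' (Finset.univ.filter (fun m : Fin n => m.val < c)) (j k')
          (fun _ => (1:ℕ))]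
        simp [Finset.mem_filter]
      rw [h1]
      have h2 : ∑ k' : Fin n, (if (j k').val < c then (1:ℕ) else 0)
          ≤ ∑ k' : Fin n, if (k'.val < c ∨ k'.val = n - 1) then (1:ℕ) else 0 := by
        apply Finset.sum_le_sum
        intro k' _
        by_cases h : (j k').val < c
        · simp only [h, if_true]
          rw [if_pos (hcc k' h)]
        · simp [h]
      refine h2.trans ?_
      have h3 : ∑ k' : Fin n, (if (k'.val < c ∨ k'.val = n - 1) then (1:ℕ) else 0)
          = ∑ k ∈ Finset.range n, if (k < c ∨ k = n - 1) then (1:ℕ) else 0 :=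
        Fin.sum_univ_eq_sum_range (fun k => if (k < c ∨ k = n - 1) then (1:ℕ) else 0) n
      rw [h3]
      have h4 : ∀ k : ℕ, (if (k < c ∨ k = n - 1) then (1:ℕ) else 0)
          ≤ (if k < c then 1 else 0) + (if k = n - 1 then 1 else 0) := by
        intro k; split_ifs <;> omega
      calc ∑ k ∈ Finset.range n, (if (k < c ∨ k = n - 1) then (1:ℕ) else 0)
          ≤ ∑ k ∈ Finset.range n, ((if k < c then (1:ℕ) else 0) + (if k = n - 1 then 1 else 0)) :=
            Finset.sum_le_sum (fun k _ => h4 k)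
        _ = (∑ k ∈ Finset.range n, if k < c then (1:ℕ) else 0)
            + ∑ k ∈ Finset.range n, if k = n - 1 then (1:ℕ) else 0 := Finset.sum_add_distrib
        _ ≤ c + 1 := by
            rw [auxF]
            have h5 : ∑ k ∈ Finset.range n, (if k = n - 1 then (1:ℕ) else 0)
                = ∑ k ∈ Finset.range n, if k = n - 1 then (fun _ : ℕ => (1:ℕ)) k else 0 := rfl
            rw [h5, Finset.sum_ite_eq' (Finset.range n) (n-1) (fun _ => (1:ℕ))]
            simp only [Finset.mem_range]
            rw [if_pos (by omega)]
            omega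
    refine ⟨?_, ?_, ?_⟩
    · have hrw : ∑ m : Fin n, (∑ k', Pi.single (j k') (1:ℕ)) m
          = ∑ m : Fin n, ∑ k' : Fin n, if m = j k' then 1 else 0 :=
        Finset.sum_congr rfl (fun m _ => hval m)
      rw [hrw, Finset.sum_comm]
      have : ∀ k' : Fin n, ∑ m : Fin n, (if m = j k' then (1:ℕ) else 0) = 1 := by
        intro k'
        rw [Finset.sum_ite_eq' Finset.univ (j k') (fun _ => (1:ℕ))]
        simp
      rw [Finset.sum_congr rfl (fun k' _ => this k')]
      simp
    · apply key
      intro k hk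
      by_contra hcon
      push_neg at hcon
      have := hj k
      rw [hC k, if_neg (by omega), apply_ite (j k ∈ ·)] at this
      split_ifs at this <;> simp only [Set.mem_setOf_eq] at this <;> omega
    · apply key
      intro k hk
      by_contra hcon
      push_neg at hcon
      have := hj k
      rw [hC k, if_neg (by push_neg; omega), apply_ite (j k ∈ ·)] at this
      split_ifs at this <;> simp only [Set.mem_setOf_eq] at this <;> omega
  · rintro ⟨hsum, hA, hB⟩
    -- build a sorted list realizing α
    obtain ⟨L, hlen, hsorted, hLcount⟩ :
        ∃ L : List (Fin n), L.length = n ∧ L.Pairwise (· ≤ ·) ∧ ∀ x, L.count x = α x := by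
      classical
      set M : Multiset (Fin n) := ∑ m : Fin n, α m • ({m} : Multiset (Fin n)) with hM
      have hMcount : ∀ x, M.count x = α x := by
        intro x
        rw [hM, Multiset.count_sum']
        have h : ∀ m : Fin n, Multiset.count x (α m • ({m} : Multiset (Fin n)))
            = if x = m then α m else 0 := by
          intro m
          rw [Multiset.count_nsmul, Multiset.count_singleton]
          split_ifs <;> simp
        rw [Finset.sum_congr rfl (fun m _ => h m), Finset.sum_ite_eq]
        simp
      have hMcard : Multiset.card M = n := by
        have h1 := Multiset.toFinset_sum_count_eq M
        have h2 : ∑ x : Fin n, M.count x = ∑ x ∈ M.toFinset, M.count x :=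
          (Finset.sum_subset (Finset.subset_univ _)
            (fun x _ hx => by
              rw [Multiset.count_eq_zero]
              simpa [Multiset.mem_toFinset] using hx)).symm
      -- card M = Σ_{toFinset} count = Σ_univ count = Σ α = n
        rw [← h1, ← h2]
        rw [Finset.sum_congr rfl (fun x _ => hMcount x)]
        exact hsum
      refine ⟨Multiset.sort M (· ≤ ·), ?_, Multiset.pairwise_sort _ _, ?_⟩
      · rw [Multiset.length_sort, hMcard]
      · intro x
        rw [← hMcount x]
        conv_rhs => rw [← Multiset.sort_eq M (· ≤ ·)]
        rw [Multiset.coe_count]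
    have hLcountP : ∀ c : ℕ, L.countP (fun x => decide (x.val < c))
        = ∑ m ∈ Finset.univ.filter (fun m : Fin n => m.val < c), α m := by
      intro c
      rw [← auxE L (fun m : Fin n => m.val < c)]
      exact Finset.sum_congr rfl (fun m _ => hLcount m)
    have hn1 : i1 < n := by omega
    set idx : Fin n → Fin n := fun k =>
      if k.val < i1 then k
      else if h2 : k.val = n - 1 then ⟨i1, hn1⟩
      else ⟨k.val + 1, by omega⟩ with hidx
    have hidxval : ∀ k : Fin n, (idx k).val =
        if k.val < i1 then k.val else if k.val = n - 1 then i1 else k.val + 1 := by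
      intro k
      simp only [hidx]
      split_ifs <;> rfl
    have hinj : Function.Injective idx := by
      intro a b hab
      have h := congrArg Fin.val hab
      rw [hidxval a, hidxval b] at h
      have ha := a.isLt
      have hb := b.isLt
      apply Fin.ext
      split_ifs at h <;> omega
    have hbij : Function.Bijective idx := Finite.injective_iff_bijective.mp hinj
    set g : Fin n → Fin L.length := fun k => (idx k).cast hlen.symm with hg
    have hgval : ∀ k, (g k).val = (idx k).val := fun k => rfl
    have hgbij : Function.Bijective g := by
      have hc : Function.Bijective (Fin.cast hlen.symm : Fin n → Fin L.length) :=
        (finCongr hlen.symm).bijective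
      exact hc.comp hbij
    refine ⟨fun k => L.get (g k), ?_, ?_⟩
    · intro k
      rw [hC k]
      split_ifs with h1 h2
      · trivial
      · push_neg at h1
        simp only [Set.mem_setOf_eq]
        apply auxB L hsorted i1 (g k)
        rw [hLcountP i1, hgval k, hidxval k, if_neg (by omega), if_neg (by omega)]
        omega
      · push_neg at h1 h2
        simp only [Set.mem_setOf_eq]
        apply auxB L hsorted i2 (g k)
        rw [hLcountP i2, hgval k, hidxval k, if_neg (by omega), if_neg (by omega)]
        omega
    · funext m
      have h1 : (∑ k : Fin n, Pi.single (L.get (g k)) (1:ℕ) : Fin n → ℕ)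
          = (∑ i : Fin L.length, Pi.single (L.get i) (1:ℕ) : Fin n → ℕ) :=
        hgbij.sum_comp (fun i => (Pi.single (L.get i) (1:ℕ) : Fin n → ℕ))
      rw [h1, auxC L (fun x => Pi.single x (1:ℕ)), auxA, hLcount]
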